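/- arXiv:2601.22649 — 3 statements merged into one kernel-verified Lean document; each statement's English description precedes it below -/
import Mathlib

section
/- For n ≥ 1, the number of classes of objects of the category of contravariant representations of {1,…,n} over F₂ with finite-dimensional values that are closed under isomorphism, contain the zero object, and are closed under finite direct sums, subobjects, and quotient objects equals the (n+1)-th Catalan number C_{n+1} = (1/(n+2))·binom(2n+2, n+1). -/
open CategoryTheory CategoryTheory.Limits

noncomputable section

abbrev F2 : Type := ZMod 2

/-- The abelian category of contravariant representations of `{1,…,n}` over `F₂`. -/
abbrev RepCat (n : ℕ) := (Fin n)ᵒᵖ ⥤ ModuleCat.{0} F2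

/-- Representations all of whose values are finite dimensional. -/
def FinDimRep (n : ℕ) := {X : RepCat n // ∀ i : (Fin n)ᵒᵖ, FiniteDimensional F2 (X.obj i)}

variable {n : ℕ}

/-- The class `S` is closed under isomorphism. -/
def IsoClosed (S : Set (FinDimRep n)) : Prop :=
  ∀ X Y : FinDimRep n, Nonempty (X.1 ≅ Y.1) → X ∈ S → Y ∈ S

/-- The class `S` contains the zero object. -/
def ContainsZero (S : Set (FinDimRep n)) : Prop :=
  ∀ X : FinDimRep n, IsZero X.1 → X ∈ S

/-- The class `S` is closed under finite direct sums. -/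
def SumClosed (S : Set (FinDimRep n)) : Prop :=
  ∀ X Y Z : FinDimRep n, X ∈ S → Y ∈ S → Nonempty (Z.1 ≅ X.1 ⊞ Y.1) → Z ∈ S

/-- The class `S` is closed under direct summands. -/
def SummandClosed (S : Set (FinDimRep n)) : Prop :=
  ∀ X Y Z : FinDimRep n, Z ∈ S → Nonempty (Z.1 ≅ X.1 ⊞ Y.1) → X ∈ S ∧ Y ∈ S

/-- The class `S` is closed under subobjects. -/
def SubClosed (S : Set (FinDimRep n)) : Prop :=
  ∀ X Y : FinDimRep n, Y ∈ S → (∃ f : X.1 ⟶ Y.1, Mono f) → X ∈ S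

/-- The class `S` is closed under quotient objects. -/
def QuotClosed (S : Set (FinDimRep n)) : Prop :=
  ∀ X Y : FinDimRep n, X ∈ S → (∃ f : X.1 ⟶ Y.1, Epi f) → Y ∈ S

/-- The class `S` is closed under extensions: the middle term of a short exact
sequence whose outer terms lie in `S` again lies in `S`. -/
def ExtClosed (S : Set (FinDimRep n)) : Prop :=
  ∀ X Y Z : FinDimRep n, X ∈ S → Z ∈ S →
    (∃ (f : X.1 ⟶ Y.1) (g : Y.1 ⟶ Z.1) (w : f ≫ g = 0),
      (ShortComplex.mk f g w).ShortExact) → Y ∈ S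

/-- The class `S` is closed under kernels of morphisms between its objects. -/
def KerClosed (S : Set (FinDimRep n)) : Prop :=
  ∀ X Y K : FinDimRep n, X ∈ S → Y ∈ S →
    (∃ f : X.1 ⟶ Y.1, Nonempty (K.1 ≅ kernel f)) → K ∈ S

/-- The class `S` is closed under cokernels of morphisms between its objects. -/
def CokerClosed (S : Set (FinDimRep n)) : Prop :=
  ∀ X Y C : FinDimRep n, X ∈ S → Y ∈ S →
    (∃ f : X.1 ⟶ Y.1, Nonempty (C.1 ≅ cokernel f)) → C ∈ S

section Combinatorics

open Finset

section PATHS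
def cpaths : (n : ℕ) → ℕ → Finset (Fin n → ℕ)
  | 0, _ => {![]}
  | n+1, h => (Finset.range (h+2)).biUnion fun x => (cpaths n x).image (Fin.cons x)

lemma mem_cpaths_succ {n h : ℕ} (f : Fin (n+1) → ℕ) :
    f ∈ cpaths (n+1) h ↔ f 0 ≤ h + 1 ∧ Fin.tail f ∈ cpaths n (f 0) := by
  simp only [cpaths, mem_biUnion, mem_image, mem_range]
  constructor
  · rintro ⟨x, hx, g, hg, rfl⟩
    simp only [Fin.cons_zero, Fin.tail_cons]
    exact ⟨by omega, hg⟩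
  · rintro ⟨h1, h2⟩
    exact ⟨f 0, by omega, Fin.tail f, h2, Fin.cons_self_tail f⟩
end PATHS

lemma mem_cpaths_iff : ∀ (n h : ℕ) (f : Fin n → ℕ), f ∈ cpaths n h ↔
    ((∀ (h0 : 0 < n), f ⟨0, h0⟩ ≤ h + 1) ∧
     (∀ k (hk : k + 1 < n), f ⟨k+1, hk⟩ ≤ f ⟨k, by omega⟩ + 1)) := by
  intro n
  induction n with
  | zero =>
    intro h f
    simp only [cpaths, Finset.mem_singleton]
    constructor
    · intro _; exact ⟨fun h0 => by omega, fun k hk => by omega⟩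
    · intro _; exact funext fun i => i.elim0
  | succ n ih =>
    intro h f
    rw [mem_cpaths_succ, ih (f 0) (Fin.tail f)]
    constructor
    · rintro ⟨h1, h2, h3⟩
      refine ⟨fun _ => h1, fun k hk => ?_⟩
      match k with
      | 0 => exact h2 (by omega)
      | (j+1) =>
        have := h3 j (by omega)
        simpa [Fin.tail] using this
    · rintro ⟨h1, h2⟩
      refine ⟨h1 (by omega), fun h0 => ?_, fun k hk => ?_⟩
      · exact h2 0 (by omega)
      · have := h2 (k+1) (by omega)
        simpa [Fin.tail] using this

lemma cpaths_le {n : ℕ} {f : Fin n → ℕ} (hf : f ∈ cpaths n 0) :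
    ∀ k (hk : k < n), f ⟨k, hk⟩ ≤ k + 1 := by
  rw [mem_cpaths_iff] at hf
  intro k
  induction k with
  | zero => intro hk; exact hf.1 hk
  | succ k ihk => intro hk; have := hf.2 k hk; have := ihk (by omega); omega

/-- Down-closed sets of intervals `[a,b] ⊆ [Fin n]` (pairs `a ≤ b`), i.e. order
ideals for the containment (sub-interval) order. -/
def IsIdl {n : ℕ} (T : Set (Fin n × Fin n)) : Prop :=
  (∀ p ∈ T, p.1 ≤ p.2) ∧
  ∀ a b c d : Fin n, (a,b) ∈ T → a ≤ c → c ≤ d → d ≤ b → (c,d) ∈ T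

lemma ncard_interval_filter {n : ℕ} (b : Fin n) (m : ℕ) (hm : m ≤ (b:ℕ) + 1)
    (s : Set (Fin n)) (hs : s = {a : Fin n | a ≤ b ∧ (b:ℕ) < (a:ℕ) + m}) :
    s.ncard = m := by
  classical
  have h1 : s = ↑(Finset.univ.filter (fun a : Fin n => a ≤ b ∧ (b:ℕ) < (a:ℕ) + m)) := by
    subst hs; ext a; simp
  rw [h1, Set.ncard_coe_finset]
  have key : (Finset.univ.filter (fun a : Fin n => a ≤ b ∧ (b:ℕ) < (a:ℕ) + m)).card
      = (Finset.Ico ((b:ℕ)+1-m) ((b:ℕ)+1)).card := by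
    refine Finset.card_bij' (fun a _ => (a : ℕ))
        (fun x hx => (⟨x, by simp only [Finset.mem_Ico] at hx; omega⟩ : Fin n)) ?_ ?_ ?_ ?_
    · intro a ha
      simp only [Finset.mem_filter, Fin.le_def] at ha
      simp only [Finset.mem_Ico]
      omega
    · intro x hx
      simp only [Finset.mem_Ico] at hx
      simp only [Finset.mem_filter, Fin.le_def]
      exact ⟨Finset.mem_univ _, by omega, by omega⟩
    · intro a ha; exact Fin.ext rfl
    · intro x hx; rfl
  rw [key, Nat.card_Ico]
  omega

variable {n : ℕ}

/-- Extension of `f : Fin n → ℕ` to `ℕ` by zero. -/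
def ext0 (f : Fin n → ℕ) : ℕ → ℕ := fun k => if hk : k < n then f ⟨k, hk⟩ else 0

lemma ext0_val (f : Fin n → ℕ) (b : Fin n) : ext0 f (b : ℕ) = f b := by
  rw [ext0, dif_pos b.isLt]

lemma ext0_le {f : Fin n → ℕ} (hf : f ∈ cpaths n 0) (k : ℕ) : ext0 f k ≤ k + 1 := by
  rw [ext0]
  split
  · exact cpaths_le hf k _
  · omega

lemma ext0_step {f : Fin n → ℕ} (hf : f ∈ cpaths n 0) (k : ℕ) (hk : k + 1 < n) :
    ext0 f (k+1) ≤ ext0 f k + 1 := by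
  rw [mem_cpaths_iff] at hf
  rw [ext0, ext0, dif_pos hk, dif_pos (by omega : k < n)]
  exact hf.2 k hk

lemma cpaths_descend {f : Fin n → ℕ} (hf : f ∈ cpaths n 0) :
    ∀ (k j c : ℕ), j ≤ k → k < n → k < c + ext0 f k → j < c + ext0 f j := by
  intro k
  induction k with
  | zero =>
    intro j c hj _ h
    have hj0 : j = 0 := Nat.le_zero.mp hj
    subst hj0; omega
  | succ k ihk =>
    intro j c hj hk h
    rcases Nat.eq_or_lt_of_le hj with rfl | hlt
    · exact h
    · have hstep := ext0_step hf k hk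
      exact ihk j c (by omega) (by omega) (by omega)

/-- Column counts of a set of intervals. -/
noncomputable def colN (T : Set (Fin n × Fin n)) (b : Fin n) : ℕ := {a | (a, b) ∈ T}.ncard

lemma colN_mem_cpaths {T : Set (Fin n × Fin n)} (hT : IsIdl T) :
    (fun b => colN T b) ∈ cpaths n 0 := by
  rw [mem_cpaths_iff]
  refine ⟨fun h0 => ?_, fun k hk => ?_⟩
  · have hsub : {a | (a, (⟨0, h0⟩ : Fin n)) ∈ T} ⊆ {(⟨0, h0⟩ : Fin n)} := by
      intro a ha
      have := hT.1 _ ha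
      simp only [Fin.le_def, Fin.val_mk] at this
      simp only [Set.mem_singleton_iff]
      exact Fin.ext (by simp only [Fin.val_mk]; omega)
    have h1 : colN T ⟨0, h0⟩ ≤ 1 :=
      le_trans (Set.ncard_le_ncard hsub (Set.toFinite _)) (le_of_eq (Set.ncard_singleton _))
    simpa using h1
  · have hsub : {a | (a, (⟨k+1, hk⟩ : Fin n)) ∈ T}
        ⊆ insert (⟨k+1, hk⟩ : Fin n) {a | (a, (⟨k, by omega⟩ : Fin n)) ∈ T} := by
      intro a ha
      have hale := hT.1 _ ha
      simp only [Fin.le_def, Fin.val_mk] at hale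
      by_cases hcase : (a : ℕ) ≤ k
      · exact Set.mem_insert_of_mem _
          (hT.2 a ⟨k+1, hk⟩ a ⟨k, by omega⟩ ha le_rfl (by simp [Fin.le_def]; omega)
            (by simp [Fin.le_def]))
      · exact Set.mem_insert_iff.2 (Or.inl (Fin.ext (by simp; omega)))
    have h1 : colN T ⟨k+1, hk⟩ ≤ colN T ⟨k, by omega⟩ + 1 :=
      le_trans (Set.ncard_le_ncard hsub (Set.toFinite _)) (Set.ncard_insert_le _ _)
    simpa using h1

/-- The ideal associated to a path. -/
def pToIdl (f : Fin n → ℕ) : Set (Fin n × Fin n) :=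
  {p | p.1 ≤ p.2 ∧ (p.2 : ℕ) < (p.1 : ℕ) + f p.2}

lemma pToIdl_isIdl {f : Fin n → ℕ} (hf : f ∈ cpaths n 0) : IsIdl (pToIdl f) := by
  constructor
  · intro p hp; exact hp.1
  · rintro a b c d ⟨hab, hcnt⟩ hac hcd hdb
    refine ⟨hcd, ?_⟩
    simp only at hcnt ⊢
    rw [← ext0_val f b] at hcnt
    rw [← ext0_val f d]
    have h1 : (b : ℕ) < (c : ℕ) + ext0 f b := by
      have := Fin.le_def.mp hac; omega
    exact cpaths_descend hf b d c (Fin.le_def.mp hdb) b.isLt h1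

lemma colN_pToIdl {f : Fin n → ℕ} (hf : f ∈ cpaths n 0) :
    (fun b => colN (pToIdl f) b) = f := by
  funext b
  have hb : f b ≤ (b:ℕ) + 1 := by
    have := ext0_le hf (b:ℕ); rwa [ext0_val] at this
  exact ncard_interval_filter b (f b) hb _ rfl

lemma pToIdl_colN {T : Set (Fin n × Fin n)} (hT : IsIdl T) :
    pToIdl (fun b => colN T b) = T := by
  ext ⟨a, b⟩
  simp only [pToIdl, Set.mem_setOf_eq]
  constructor
  · rintro ⟨hab', hcnt'⟩
    have hab : a ≤ b := hab'
    have hcnt : (b:ℕ) < (a:ℕ) + colN T b := hcnt'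
    clear hab' hcnt'
    by_contra hnot
    have hsub : {x | (x, b) ∈ T} ⊆ {x : Fin n | x ≤ b ∧ (b:ℕ) < (x:ℕ) + ((b:ℕ) - (a:ℕ))} := by
      intro x hx
      have hxb := hT.1 _ hx
      refine ⟨hxb, ?_⟩
      have hax : (a : ℕ) < (x : ℕ) := by
        by_contra hxa
        push_neg at hxa
        exact hnot (hT.2 x b a b hx (Fin.le_def.mpr hxa) hab le_rfl)
      have := Fin.le_def.mp hxb
      omega
    have hcard : colN T b ≤ (b:ℕ) - (a:ℕ) :=
      le_trans (Set.ncard_le_ncard hsub (Set.toFinite _))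
        (le_of_eq (ncard_interval_filter b _ (by omega) _ rfl))
    have := Fin.le_def.mp hab
    omega
  · intro hmem
    have hab : a ≤ b := hT.1 _ hmem
    refine ⟨hab, ?_⟩
    show (b:ℕ) < (a:ℕ) + colN T b
    have hd := Fin.le_def.mp hab
    have hsub : {x : Fin n | x ≤ b ∧ (b:ℕ) < (x:ℕ) + ((b:ℕ) - (a:ℕ) + 1)} ⊆ {x | (x, b) ∈ T} := by
      rintro x ⟨hxb, hcnt⟩
      have hax : (a : ℕ) ≤ (x : ℕ) := by
        have := Fin.le_def.mp hxb; omega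
      exact hT.2 a b x b hmem (Fin.le_def.mpr hax) hxb le_rfl
    have hcard : (b:ℕ) - (a:ℕ) + 1 ≤ colN T b :=
      le_trans (le_of_eq (ncard_interval_filter b _ (by omega) _ rfl).symm)
        (Set.ncard_le_ncard hsub (Set.toFinite _))
    omega

noncomputable def idlEquiv :
    {T : Set (Fin n × Fin n) // IsIdl T} ≃ {f : Fin n → ℕ // f ∈ cpaths n 0} where
  toFun := fun ⟨T, hT⟩ => ⟨fun b => colN T b, colN_mem_cpaths hT⟩
  invFun := fun ⟨f, hf⟩ => ⟨pToIdl f, pToIdl_isIdl hf⟩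
  left_inv := fun ⟨T, hT⟩ => Subtype.ext (pToIdl_colN hT)
  right_inv := fun ⟨f, hf⟩ => Subtype.ext (colN_pToIdl hf)

theorem card_idl : Nat.card {T : Set (Fin n × Fin n) // IsIdl T} = (cpaths n 0).card := by
  rw [Nat.card_congr idlEquiv, Nat.card_eq_fintype_card]
  exact Fintype.card_coe _

lemma card_cpaths_zero (h : ℕ) : (cpaths 0 h).card = 1 := rfl

lemma card_cpaths_succ (n h : ℕ) :
    (cpaths (n+1) h).card = ∑ x ∈ Finset.range (h+2), (cpaths n x).card := by
  rw [cpaths, Finset.card_biUnion]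
  · refine Finset.sum_congr rfl fun x _ => ?_
    exact Finset.card_image_of_injective _ (Fin.cons_right_injective (α := fun _ => ℕ) x)
  · intro x _ y _ hxy
    rw [Function.onFun, Finset.disjoint_left]
    rintro f hf hg
    simp only [mem_image] at hf hg
    obtain ⟨g1, _, rfl⟩ := hf
    obtain ⟨g2, _, hg2⟩ := hg
    apply hxy
    have := congrFun hg2 0
    simpa using this.symm

/-- `m`-fold convolution power of the Catalan sequence. -/
def catconv : ℕ → ℕ → ℕ
  | 0, n => if n = 0 then 1 else 0
  | m+1, n => ∑ i ∈ Finset.range (n+1), catalan i * catconv m (n - i)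

lemma catconv_zero_right : ∀ m, catconv m 0 = 1
  | 0 => rfl
  | m+1 => by simp [catconv, catconv_zero_right m]

lemma catconv_one (n : ℕ) : catconv 1 n = catalan n := by
  rw [catconv]
  rw [Finset.sum_eq_single n]
  · simp [catconv]
  · intro i hi hne
    have : n - i ≠ 0 := by simp at hi; omega
    simp [catconv, this]
  · intro h; simp at h

lemma catconv_two (n : ℕ) : catconv 2 n = catalan (n+1) := by
  rw [catconv, catalan_succ, Fin.sum_univ_eq_sum_range (fun i => catalan i * catalan (n - i))]
  exact Finset.sum_congr rfl fun i _ => by rw [catconv_one]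

lemma catconv_shift : ∀ m n, catconv (m+1) (n+1) = ∑ x ∈ Finset.range (m+1), catconv (x+2) n := by
  intro m
  induction m with
  | zero => intro n; simp [catconv_one, catconv_two]
  | succ m ih =>
    intro n
    have expand : catconv (m+2) (n+1)
        = ∑ i ∈ Finset.range (n+1), catalan i * catconv (m+1) (n+1-i) + catalan (n+1) := by
      rw [catconv, Finset.sum_range_succ, Nat.sub_self, catconv_zero_right, mul_one]
    rw [expand]
    have step : ∀ i ∈ Finset.range (n+1),
        catalan i * catconv (m+1) (n+1-i)
          = ∑ x ∈ Finset.range (m+1), catalan i * catconv (x+2) (n-i) := by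
      intro i hi
      simp only [mem_range] at hi
      have : n + 1 - i = (n - i) + 1 := by omega
      rw [this, ih (n-i), Finset.mul_sum]
    rw [Finset.sum_congr rfl step, Finset.sum_comm]
    have : ∀ x ∈ Finset.range (m+1),
        ∑ i ∈ Finset.range (n+1), catalan i * catconv (x+2) (n-i) = catconv (x+3) n := by
      intro x _
      rw [catconv]
    rw [Finset.sum_congr rfl this]
    rw [Finset.sum_range_succ' (fun x => catconv (x+2) n) (m+1), catconv_two]

lemma card_cpaths_eq_catconv : ∀ n h, (cpaths n h).card = catconv (h+2) n := by
  intro n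
  induction n with
  | zero => intro h; rw [card_cpaths_zero, catconv_zero_right]
  | succ n ih =>
    intro h
    rw [card_cpaths_succ, catconv_shift (h+1) n]
    exact Finset.sum_congr rfl fun x _ => ih x

theorem card_cpaths_catalan (n : ℕ) : (cpaths n 0).card = catalan (n+1) := by
  rw [card_cpaths_eq_catconv, catconv_two]

end Combinatorics

/-- The submodule of `F2` that is everything if `P`, zero otherwise. -/
def P2 (P : Prop) : Submodule F2 F2 where
  carrier := {x | ¬P → x = 0}
  add_mem' := fun {a b} ha hb h => by rw [ha h, hb h, add_zero]
  zero_mem' := fun _ => rfl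
  smul_mem' := fun c x hx h => by rw [hx h, smul_zero]

def Mv (P : Prop) : ModuleCat.{0} F2 := ModuleCat.of F2 (P2 P)

lemma Mv.val_eq_zero {P : Prop} (hP : ¬P) (x : Mv P) : x.1 = 0 := x.2 hP

lemma Mv.subsingleton {P : Prop} (hP : ¬P) : Subsingleton (Mv P) :=
  ⟨fun a b => Subtype.ext (by rw [a.2 hP, b.2 hP])⟩

def mvOne {P : Prop} (hP : P) : Mv P := ⟨1, fun h => absurd hP h⟩

lemma mvOne_ne_zero {P : Prop} (hP : P) : mvOne hP ≠ 0 := by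
  intro h
  have : (1 : F2) = 0 := congrArg Subtype.val h
  exact one_ne_zero this

instance (P : Prop) : FiniteDimensional F2 (Mv P) :=
  (inferInstance : FiniteDimensional F2 ↥(P2 P))

open Classical in
/-- The canonical map `Mv P → Mv Q`. -/
def iotaM (P Q : Prop) : Mv P ⟶ Mv Q :=
  if hq : Q then ModuleCat.ofHom <|
    { toFun := fun x => ⟨x.1, fun h => absurd hq h⟩
      map_add' := fun x y => rfl
      map_smul' := fun c x => rfl }
  else 0

lemma iotaM_val_pos {P Q : Prop} (hq : Q) (x : Mv P) : ((iotaM P Q) x).1 = x.1 := by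
  have e : iotaM P Q = _ := dif_pos hq
  rw [e]; rfl

lemma iotaM_of_neg {P Q : Prop} (hq : ¬Q) : iotaM P Q = 0 := by
  exact dif_neg hq

open Classical in
lemma iotaM_val {P Q : Prop} (x : Mv P) :
    ((iotaM P Q) x).1 = if Q then x.1 else 0 := by
  by_cases hq : Q
  · rw [if_pos hq]; exact iotaM_val_pos hq x
  · rw [if_neg hq, iotaM_of_neg hq]; rfl

lemma iotaM_of_notP {P Q : Prop} (hp : ¬P) : iotaM P Q = 0 := by
  apply ModuleCat.hom_ext; apply LinearMap.ext
  intro x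
  apply Subtype.ext
  rw [iotaM_val, Mv.val_eq_zero hp x]
  simp; rfl

/-- Representation with values `Mv (Q i)` for a convex predicate `Q`. -/
def MRep (Q : Fin n → Prop)
    (hconv : ∀ {i j k : Fin n}, i ≤ j → j ≤ k → Q i → Q k → Q j) : RepCat n where
  obj i := Mv (Q i.unop)
  map {i j} _ := iotaM (Q i.unop) (Q j.unop)
  map_id i := by
    apply ModuleCat.hom_ext; apply LinearMap.ext
    intro x
    by_cases h : Q i.unop
    · exact Subtype.ext (iotaM_val_pos h x)
    · have := Mv.subsingleton h
      exact Subsingleton.elim _ _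
  map_comp {i j k} f g := by
    apply ModuleCat.hom_ext; apply LinearMap.ext
    intro x
    apply Subtype.ext
    have hji : j.unop ≤ i.unop := leOfHom f.unop
    have hkj : k.unop ≤ j.unop := leOfHom g.unop
    show ((iotaM (Q i.unop) (Q k.unop)) x).1
      = ((iotaM (Q j.unop) (Q k.unop)) ((iotaM (Q i.unop) (Q j.unop)) x)).1
    rw [iotaM_val, iotaM_val, iotaM_val]
    by_cases hr : Q k.unop
    · rw [if_pos hr, if_pos hr]
      by_cases hq : Q j.unop
      · rw [if_pos hq]
      · rw [if_neg hq]
        have hp : ¬ Q i.unop := fun hp => hq (hconv hkj hji hr hp)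
        exact Mv.val_eq_zero hp x
    · rw [if_neg hr, if_neg hr]

lemma ivl_conv (a b : Fin n) : ∀ {i j k : Fin n}, i ≤ j → j ≤ k →
    (a ≤ i ∧ i ≤ b) → (a ≤ k ∧ k ≤ b) → (a ≤ j ∧ j ≤ b) :=
  fun hij hjk hi hk => ⟨le_trans hi.1 hij, le_trans hjk hk.2⟩

/-- The interval representation `[a,b]`. -/
def Ivl (a b : Fin n) : RepCat n :=
  MRep (fun i => a ≤ i ∧ i ≤ b) (ivl_conv a b)

def IvlF (a b : Fin n) : FinDimRep n :=
  ⟨Ivl a b, fun i => (inferInstance : FiniteDimensional F2 (Mv (a ≤ i.unop ∧ i.unop ≤ b)))⟩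

section NatMaps

variable {Q Q' : Fin n → Prop}

/-- Natural transformation between `MRep`s given by the canonical maps. -/
def iotaNat (hc : ∀ {i j k : Fin n}, i ≤ j → j ≤ k → Q i → Q k → Q j)
    (hc' : ∀ {i j k : Fin n}, i ≤ j → j ≤ k → Q' i → Q' k → Q' j)
    (H : ∀ {j i : Fin n}, j ≤ i → Q i → Q' j → Q' i ∧ Q j) :
    MRep Q hc ⟶ MRep Q' hc' where
  app i := iotaM (Q i.unop) (Q' i.unop)
  naturality {i j} f := by
    apply ModuleCat.hom_ext; apply LinearMap.ext; intro (x : Mv (Q i.unop))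
    apply Subtype.ext
    show (iotaM (Q j.unop) (Q' j.unop) (iotaM (Q i.unop) (Q j.unop) x)).1
       = (iotaM (Q' i.unop) (Q' j.unop) (iotaM (Q i.unop) (Q' i.unop) x)).1
    rw [iotaM_val, iotaM_val, iotaM_val, iotaM_val]
    by_cases hq'j : Q' j.unop
    swap
    · rw [if_neg hq'j, if_neg hq'j]
    rw [if_pos hq'j, if_pos hq'j]
    by_cases hx : x.1 = 0
    · split_ifs <;> simp [hx]
    · have hQi : Q i.unop := by
        by_contra h
        exact hx (x.2 h)
      obtain ⟨h1, h2⟩ := H (leOfHom f.unop) hQi hq'j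
      rw [if_pos h1, if_pos h2]

/-- Pointwise equivalent convex predicates give isomorphic representations. -/
def mrepIso (hc : ∀ {i j k : Fin n}, i ≤ j → j ≤ k → Q i → Q k → Q j)
    (hc' : ∀ {i j k : Fin n}, i ≤ j → j ≤ k → Q' i → Q' k → Q' j)
    (h : ∀ i, Q i ↔ Q' i) : MRep Q hc ≅ MRep Q' hc' where
  hom := iotaNat hc hc' (fun _ hQi hQ'j => ⟨(h _).mp hQi, (h _).mpr hQ'j⟩)
  inv := iotaNat hc' hc (fun _ hQ'i hQj => ⟨(h _).mpr hQ'i, (h _).mp hQj⟩)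
  hom_inv_id := by
    apply NatTrans.ext; funext i
    apply ModuleCat.hom_ext; apply LinearMap.ext; intro (x : Mv (Q i.unop))
    apply Subtype.ext
    show (iotaM (Q' i.unop) (Q i.unop) (iotaM (Q i.unop) (Q' i.unop) x)).1 = x.1
    rw [iotaM_val, iotaM_val]
    by_cases hq : Q i.unop
    · rw [if_pos hq, if_pos ((h _).mp hq)]
    · rw [if_neg hq, Mv.val_eq_zero hq x]
  inv_hom_id := by
    apply NatTrans.ext; funext i
    apply ModuleCat.hom_ext; apply LinearMap.ext; intro (x : Mv (Q' i.unop))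
    apply Subtype.ext
    show (iotaM (Q i.unop) (Q' i.unop) (iotaM (Q' i.unop) (Q i.unop) x)).1 = x.1
    rw [iotaM_val, iotaM_val]
    by_cases hq : Q' i.unop
    · rw [if_pos hq, if_pos ((h _).mpr hq)]
    · rw [if_neg hq, Mv.val_eq_zero hq x]

end NatMaps

lemma ivl_map_ne_zero {a b : Fin n} (hab : a ≤ b) :
    (Ivl a b).map (homOfLE hab).op ≠ 0 := by
  intro h
  have h1 : ((Ivl a b).map (homOfLE hab).op (mvOne ⟨hab, le_rfl⟩)).1 = 1 :=
    iotaM_val_pos ⟨le_rfl, hab⟩ _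
  rw [h] at h1
  change (0 : F2) = 1 at h1
  exact one_ne_zero (α := F2) (by simpa using h1.symm)

lemma ivl_map_eq_zero {a b c d : Fin n} (hcd : c ≤ d) (h : ¬(a ≤ c ∧ d ≤ b)) :
    (Ivl a b).map (homOfLE hcd).op = 0 := by
  show iotaM (a ≤ d ∧ d ≤ b) (a ≤ c ∧ c ≤ b) = 0
  by_cases hq : a ≤ c ∧ c ≤ b
  · apply iotaM_of_notP
    rintro ⟨had, hdb⟩
    exact h ⟨hq.1, hdb⟩
  · exact iotaM_of_neg hq

section Cyclic

variable (X : RepCat n) (b : Fin n) (v : X.obj (Opposite.op b))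

/-- The orbit of a vector `v ∈ X(b)` under the structure maps. -/
def uvec : ∀ i : Fin n, X.obj (Opposite.op i) :=
  fun i => if h : i ≤ b then X.map (homOfLE h).op v else 0

lemma uvec_self : uvec X b v b = v := by
  rw [uvec, dif_pos le_rfl]
  have : (homOfLE (le_refl b)) = 𝟙 b := rfl
  rw [this]
  show X.map (𝟙 (Opposite.op b)) v = v
  rw [X.map_id]
  rfl

lemma uvec_map {j i : Fin n} (hji : j ≤ i) (hib : i ≤ b) :
    X.map (homOfLE hji).op (uvec X b v i) = uvec X b v j := by
  rw [uvec, dif_pos hib, uvec, dif_pos (hji.trans hib)]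
  show (X.map (homOfLE hib).op ≫ X.map (homOfLE hji).op) v = _
  rw [← X.map_comp, ← op_comp, homOfLE_comp]

lemma uvec_ne_zero_of_le {j i : Fin n} (hji : j ≤ i) (hib : i ≤ b)
    (h : uvec X b v j ≠ 0) : uvec X b v i ≠ 0 := by
  intro h0
  apply h
  rw [← uvec_map X b v hji hib, h0, map_zero]

lemma cyc_conv : ∀ {i j k : Fin n}, i ≤ j → j ≤ k →
    (i ≤ b ∧ uvec X b v i ≠ 0) → (k ≤ b ∧ uvec X b v k ≠ 0) →
    (j ≤ b ∧ uvec X b v j ≠ 0) :=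
  fun {i j k} hij hjk hQi hQk =>
    ⟨hjk.trans hQk.1, uvec_ne_zero_of_le X b v hij (hjk.trans hQk.1) hQi.2⟩

/-- The cyclic subrepresentation generated by `v ∈ X(b)` (as an abstract `MRep`). -/
def cyc : RepCat n :=
  MRep (fun i => i ≤ b ∧ uvec X b v i ≠ 0) (cyc_conv X b v)

/-- The monomorphism from the cyclic subrepresentation to `X`. -/
def cycHom : cyc X b v ⟶ X where
  app i := ModuleCat.ofHom <|
    { toFun := fun x => x.1 • uvec X b v i.unop
      map_add' := fun x y => by
        show (x.1 + y.1) • _ = _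
        rw [add_smul]
      map_smul' := fun c x => by
        show (c * x.1) • _ = c • (x.1 • _)
        rw [mul_smul] }
  naturality {i j} f := by
    apply ModuleCat.hom_ext; apply LinearMap.ext; intro (x : Mv (i.unop ≤ b ∧ uvec X b v i.unop ≠ 0))
    have hji : j.unop ≤ i.unop := leOfHom f.unop
    have hf : f = (homOfLE hji).op := congrArg Quiver.Hom.op (Subsingleton.elim _ _)
    subst hf
    show (iotaM (i.unop ≤ b ∧ uvec X b v i.unop ≠ 0)
        (j.unop ≤ b ∧ uvec X b v j.unop ≠ 0) x).1 • uvec X b v j.unop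
      = X.map (homOfLE hji).op (x.1 • uvec X b v i.unop)
    rw [map_smul, iotaM_val]
    by_cases hx : x.1 = 0
    · rw [hx]; simp
    · have hQi : i.unop ≤ b ∧ uvec X b v i.unop ≠ 0 := by
        by_contra h
        exact hx (x.2 h)
      by_cases hQj : j.unop ≤ b ∧ uvec X b v j.unop ≠ 0
      · rw [uvec_map X b v hji hQi.1, if_pos hQj]
      · have huj : uvec X b v j.unop = 0 := by
          by_contra h
          exact hQj ⟨hji.trans hQi.1, h⟩
        rw [uvec_map X b v hji hQi.1, if_neg hQj, huj]
        simp


instance cycHom_mono : Mono (cycHom X b v) := by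
  have hmono : ∀ i, Mono ((cycHom X b v).app i) := by
    intro i
    rw [ModuleCat.mono_iff_injective]
    by_cases hQ : i.unop ≤ b ∧ uvec X b v i.unop ≠ 0
    · intro x y hxy
      apply Subtype.ext
      have hz : (x.1 - y.1) • uvec X b v i.unop = 0 := by
        rw [sub_smul]
        show (cycHom X b v).app i x - (cycHom X b v).app i y = 0
        rw [hxy, sub_self]
      rcases smul_eq_zero.mp hz with h | h
      · exact sub_eq_zero.mp h
      · exact absurd h hQ.2
    · exact fun x y _ => @Subsingleton.elim _ (Mv.subsingleton hQ) x y
  haveI := hmono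
  exact NatTrans.mono_of_mono_app _

/-- The epimorphism from the cyclic subrepresentation to the interval `[a,b]`,
when the orbit of `v` survives down to `a`. -/
def cycToIvl (a : Fin n) (hab : a ≤ b) (hua : uvec X b v a ≠ 0) :
    cyc X b v ⟶ Ivl a b :=
  iotaNat (cyc_conv X b v) (ivl_conv a b) (fun {j i} hji hQi hP'j => by
    refine ⟨⟨hP'j.1.trans hji, hQi.1⟩, hji.trans hQi.1, ?_⟩
    intro h0
    apply hua
    rw [← uvec_map X b v hP'j.1 hP'j.2, h0, map_zero])

instance cycToIvl_epi (a : Fin n) (hab : a ≤ b) (hua : uvec X b v a ≠ 0) :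
    Epi (cycToIvl X b v a hab hua) := by
  have hepi : ∀ i, Epi ((cycToIvl X b v a hab hua).app i) := by
    intro i
    rw [ModuleCat.epi_iff_surjective]
    intro (y : Mv (a ≤ i.unop ∧ i.unop ≤ b))
    by_cases hP : a ≤ i.unop ∧ i.unop ≤ b
    · have hQ : i.unop ≤ b ∧ uvec X b v i.unop ≠ 0 := by
        refine ⟨hP.2, fun h0 => hua ?_⟩
        rw [← uvec_map X b v hP.1 hP.2, h0, map_zero]
      refine ⟨⟨y.1, fun h => absurd hQ h⟩, ?_⟩
      apply Subtype.ext
      show (iotaM (i.unop ≤ b ∧ uvec X b v i.unop ≠ 0) (a ≤ i.unop ∧ i.unop ≤ b) _).1 = y.1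
      erw [iotaM_val, if_pos hP]
    · exact ⟨0, @Subsingleton.elim _ (Mv.subsingleton hP) _ _⟩
  haveI := hepi
  exact NatTrans.epi_of_epi_app _

end Cyclic

section Sums

variable (A B : RepCat n)

/-- Explicit binary direct sum in `RepCat n`. -/
def PairRep : RepCat n where
  obj i := ModuleCat.of F2 (A.obj i × B.obj i)
  map {i j} f := ModuleCat.ofHom ((A.map f).hom.prodMap (B.map f).hom)
  map_id i := by
    apply ModuleCat.hom_ext; apply LinearMap.ext; intro x
    apply Prod.ext
    · show A.map (𝟙 i) x.1 = x.1
      rw [A.map_id]; rfl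
    · show B.map (𝟙 i) x.2 = x.2
      rw [B.map_id]; rfl
  map_comp {i j k} f g := by
    apply ModuleCat.hom_ext; apply LinearMap.ext; intro x
    apply Prod.ext
    · show A.map (f ≫ g) x.1 = A.map g (A.map f x.1)
      rw [A.map_comp]; rfl
    · show B.map (f ≫ g) x.2 = B.map g (B.map f x.2)
      rw [B.map_comp]; rfl

def pairInl : A ⟶ PairRep A B where
  app i := ModuleCat.ofHom (LinearMap.inl F2 _ _)
  naturality {i j} f := by
    apply ModuleCat.hom_ext; apply LinearMap.ext; intro x
    apply Prod.ext
    · rfl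
    · show (0 : (B.obj j)) = B.map f 0
      rw [map_zero]

def pairInr : B ⟶ PairRep A B where
  app i := ModuleCat.ofHom (LinearMap.inr F2 _ _)
  naturality {i j} f := by
    apply ModuleCat.hom_ext; apply LinearMap.ext; intro x
    apply Prod.ext
    · show (0 : (A.obj j)) = A.map f 0
      rw [map_zero]
    · rfl

def pairFst : PairRep A B ⟶ A where
  app i := ModuleCat.ofHom (LinearMap.fst F2 _ _)
  naturality {i j} f := by apply ModuleCat.hom_ext; apply LinearMap.ext; intro x; rfl

def pairSnd : PairRep A B ⟶ B where
  app i := ModuleCat.ofHom (LinearMap.snd F2 _ _)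
  naturality {i j} f := by apply ModuleCat.hom_ext; apply LinearMap.ext; intro x; rfl

def pairDesc {X : RepCat n} (f : A ⟶ X) (g : B ⟶ X) : PairRep A B ⟶ X where
  app i := ModuleCat.ofHom ((f.app i).hom.coprod (g.app i).hom)
  naturality {i j} h := by
    apply ModuleCat.hom_ext; apply LinearMap.ext; intro x
    show f.app j (A.map h x.1) + g.app j (B.map h x.2)
      = X.map h (f.app i x.1 + g.app i x.2)
    rw [map_add]
    congr 1
    · exact (ConcreteCategory.congr_hom (f.naturality h) x.1)
    · exact (ConcreteCategory.congr_hom (g.naturality h) x.2)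

/-- `PairRep` is a biproduct. -/
def pairIso : PairRep A B ≅ A ⊞ B where
  hom := biprod.lift (pairFst A B) (pairSnd A B)
  inv := biprod.desc (pairInl A B) (pairInr A B)
  hom_inv_id := by
    rw [biprod.lift_desc]
    apply NatTrans.ext; funext i
    rw [NatTrans.app_add]
    apply ModuleCat.hom_ext; apply LinearMap.ext; intro x
    show ((x.1, (0 : B.obj i)) : (A.obj i × B.obj i)) + ((0 : A.obj i), x.2) = x
    apply Prod.ext <;> simp
  inv_hom_id := by
    apply biprod.hom_ext'
    · rw [← Category.assoc, biprod.inl_desc, Category.comp_id]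
      apply biprod.hom_ext
      · rw [Category.assoc, biprod.lift_fst, biprod.inl_fst]
        apply NatTrans.ext; funext i
        apply ModuleCat.hom_ext; apply LinearMap.ext; intro x; rfl
      · rw [Category.assoc, biprod.lift_snd, biprod.inl_snd]
        apply NatTrans.ext; funext i
        apply ModuleCat.hom_ext; apply LinearMap.ext; intro x; rfl
    · rw [← Category.assoc, biprod.inr_desc, Category.comp_id]
      apply biprod.hom_ext
      · rw [Category.assoc, biprod.lift_fst, biprod.inr_fst]
        apply NatTrans.ext; funext i
        apply ModuleCat.hom_ext; apply LinearMap.ext; intro x; rfl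
      · rw [Category.assoc, biprod.lift_snd, biprod.inr_snd]
        apply NatTrans.ext; funext i
        apply ModuleCat.hom_ext; apply LinearMap.ext; intro x; rfl

end Sums

section Key

variable {S : Set (FinDimRep n)}

/-- The cyclic subrepresentation, as an object of `FinDimRep n`. -/
def cycF (X : RepCat n) (b : Fin n) (v : X.obj (Opposite.op b)) : FinDimRep n :=
  ⟨cyc X b v, fun i => (inferInstance :
    FiniteDimensional F2 (Mv (i.unop ≤ b ∧ uvec X b v i.unop ≠ 0)))⟩

/-- Lemma 1: if some structure map of `X ∈ S` does not vanish on `[a,b]`, then the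
interval module `[a,b]` belongs to `S`. -/
lemma ivl_mem_of_map_ne_zero (hSub : SubClosed S) (hQuot : QuotClosed S)
    (X : FinDimRep n) (hX : X ∈ S) {a b : Fin n} (hab : a ≤ b)
    (hmap : X.1.map (homOfLE hab).op ≠ 0) : IvlF a b ∈ S := by
  have hv : ∃ v, X.1.map (homOfLE hab).op v ≠ 0 := by
    by_contra h
    push_neg at h
    exact hmap (ModuleCat.hom_ext (LinearMap.ext fun v => h v))
  obtain ⟨v, hv⟩ := hv
  have hua : uvec X.1 b v a ≠ 0 := by
    rw [uvec, dif_pos hab]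
    exact hv
  have hcyc : cycF X.1 b v ∈ S :=
    hSub _ X hX ⟨cycHom X.1 b v, cycHom_mono X.1 b v⟩
  exact hQuot _ _ hcyc ⟨cycToIvl X.1 b v a hab hua, cycToIvl_epi X.1 b v a hab hua⟩

/-- Each cyclic subrepresentation of `X` belongs to `S`, provided the relevant
interval modules do. -/
lemma cycF_mem (hIso : IsoClosed S) (hZero : ContainsZero S)
    (X : FinDimRep n)
    (hX : ∀ a b : Fin n, ∀ hab : a ≤ b, IvlF a b ∉ S → X.1.map (homOfLE hab).op = 0)
    (b : Fin n) (v : X.1.obj (Opposite.op b)) : cycF X.1 b v ∈ S := by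
  classical
  by_cases hv : v = 0
  · apply hZero
    apply Functor.isZero
    intro i
    have hQ : ¬(i.unop ≤ b ∧ uvec X.1 b v i.unop ≠ 0) := by
      rintro ⟨hib, hu⟩
      apply hu
      rw [uvec, dif_pos hib, hv, map_zero]
    haveI : Subsingleton ((cycF X.1 b v).1.obj i) := Mv.subsingleton hQ
    exact ModuleCat.isZero_of_subsingleton _
  · have hbmem : b ∈ Finset.univ.filter (fun j => uvec X.1 b v j ≠ 0) := by
      simp only [Finset.mem_filter, Finset.mem_univ, true_and]
      rw [uvec_self]
      exact hv
    set s := Finset.univ.filter (fun j => uvec X.1 b v j ≠ 0) with hs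
    have hne : s.Nonempty := ⟨b, hbmem⟩
    set a0 := s.min' hne with ha0
    have ha0mem : a0 ∈ s := s.min'_mem hne
    have hua0 : uvec X.1 b v a0 ≠ 0 := by
      have := ha0mem
      rw [hs, Finset.mem_filter] at this
      exact this.2
    have ha0b : a0 ≤ b := s.min'_le b hbmem
    have hiff : ∀ j : Fin n, (a0 ≤ j ∧ j ≤ b) ↔ (j ≤ b ∧ uvec X.1 b v j ≠ 0) := by
      intro j
      constructor
      · rintro ⟨h1, h2⟩
        refine ⟨h2, fun h0 => hua0 ?_⟩
        rw [← uvec_map X.1 b v h1 h2, h0, map_zero]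
      · rintro ⟨h1, h2⟩
        exact ⟨s.min'_le j (by rw [hs, Finset.mem_filter]; exact ⟨Finset.mem_univ _, h2⟩), h1⟩
    have hivl : IvlF a0 b ∈ S := by
      by_contra hnot
      have h0 := hX a0 b ha0b hnot
      apply hua0
      rw [uvec, dif_pos ha0b, h0]
      rfl
    exact hIso (IvlF a0 b) (cycF X.1 b v)
      ⟨mrepIso (ivl_conv a0 b) (cyc_conv X.1 b v) hiff⟩ hivl

/-- The finite-dimensionality package for `PairRep`. -/
def pairF (A B : FinDimRep n) : FinDimRep n :=
  ⟨PairRep A.1 B.1, fun i => by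
    haveI := A.2 i
    haveI := B.2 i
    exact (inferInstance : FiniteDimensional F2 (A.1.obj i × B.1.obj i))⟩

lemma exists_sum_cover (hIso : IsoClosed S) (hZero : ContainsZero S) (hSum : SumClosed S)
    (X : RepCat n) :
    ∀ L : List ((C : FinDimRep n) ×' (C.1 ⟶ X)), (∀ p ∈ L, p.1 ∈ S) →
    ∃ (W : FinDimRep n) (g : W.1 ⟶ X), W ∈ S ∧
      ∀ p ∈ L, ∀ (i : (Fin n)ᵒᵖ) (y : X.obj i), (∃ z, p.2.app i z = y) →
        (∃ w, g.app i w = y) := by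
  intro L
  induction L with
  | nil =>
    intro _
    refine ⟨⟨MRep (fun _ => False) (fun _ _ h _ => h.elim), fun i =>
      (inferInstance : FiniteDimensional F2 (Mv False))⟩, 0, ?_, ?_⟩
    · apply hZero
      apply Functor.isZero
      intro i
      exact @ModuleCat.isZero_of_subsingleton _ _ _ (Mv.subsingleton (fun h => h))
    · intro p hp
      exact absurd hp List.not_mem_nil
  | cons p L ih =>
    intro hL
    obtain ⟨W', g', hW', hcov⟩ := ih (fun q hq => hL q (List.mem_cons_of_mem p hq))
    refine ⟨pairF p.1 W', pairDesc p.1.1 W'.1 p.2 g', ?_, ?_⟩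
    · exact hSum p.1 W' _ (hL p List.mem_cons_self) hW' ⟨pairIso p.1.1 W'.1⟩
    · rintro q hq i y hy
      rcases List.mem_cons.mp hq with rfl | hq
      · obtain ⟨z, hz⟩ := hy
        refine ⟨(z, 0), ?_⟩
        show q.2.app i z + g'.app i 0 = y
        rw [map_zero, add_zero, hz]
      · obtain ⟨w, hw⟩ := hcov q hq i y hy
        refine ⟨(0, w), ?_⟩
        show p.2.app i 0 + g'.app i w = y
        rw [map_zero, zero_add, hw]

/-- Lemma 2: if all structure maps corresponding to intervals not in `S` vanish,
then `X ∈ S`. -/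
lemma mem_of_maps_vanish (hIso : IsoClosed S) (hZero : ContainsZero S)
    (hSum : SumClosed S) (hQuot : QuotClosed S) (X : FinDimRep n)
    (hX : ∀ a b : Fin n, ∀ hab : a ≤ b, IvlF a b ∉ S → X.1.map (homOfLE hab).op = 0) :
    X ∈ S := by
  classical
  -- choose spanning sets
  have hspan : ∀ i : (Fin n)ᵒᵖ, ∃ s : Finset (X.1.obj i),
      Submodule.span F2 (↑s : Set (X.1.obj i)) = ⊤ := by
    intro i
    haveI := X.2 i
    exact Module.finite_def.mp inferInstance
  choose sp hsp using hspan
  set L : List ((C : FinDimRep n) ×' (C.1 ⟶ X.1)) :=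
    (Finset.univ : Finset (Fin n)).toList.flatMap
      (fun b => (sp (Opposite.op b)).toList.map
        (fun v => ⟨cycF X.1 b v, cycHom X.1 b v⟩)) with hLdef
  have hLmem : ∀ p ∈ L, p.1 ∈ S := by
    intro p hp
    rw [hLdef, List.mem_flatMap] at hp
    obtain ⟨b, _, hp⟩ := hp
    rw [List.mem_map] at hp
    obtain ⟨v, _, rfl⟩ := hp
    exact cycF_mem hIso hZero X hX b v
  obtain ⟨W, g, hW, hcov⟩ := exists_sum_cover hIso hZero hSum X.1 L hLmem
  have hepi : ∀ i, Epi (g.app i) := by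
    intro i
    rw [ModuleCat.epi_iff_surjective]
    rw [← LinearMap.range_eq_top]
    rw [← top_le_iff, ← hsp i, Submodule.span_le]
    intro v hv
    rw [Finset.mem_coe] at hv
    by_cases hv0 : v = 0
    · rw [hv0]; exact Submodule.zero_mem _
    · have hQ : i.unop ≤ i.unop ∧ uvec X.1 i.unop v i.unop ≠ 0 := by
        refine ⟨le_rfl, ?_⟩
        rw [uvec_self]
        exact hv0
      have hz : (cycHom X.1 i.unop v).app i ⟨1, fun h => absurd hQ h⟩ = v := by
        show (1 : F2) • uvec X.1 i.unop v i.unop = v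
        rw [one_smul, uvec_self]
      have hpL : (⟨cycF X.1 i.unop v, cycHom X.1 i.unop v⟩ :
          (C : FinDimRep n) ×' (C.1 ⟶ X.1)) ∈ L := by
        rw [hLdef, List.mem_flatMap]
        exact ⟨i.unop, Finset.mem_toList.mpr (Finset.mem_univ _),
          List.mem_map.mpr ⟨v, Finset.mem_toList.mpr hv, rfl⟩⟩
      obtain ⟨w, hw⟩ := hcov _ hpL i v ⟨_, hz⟩
      exact LinearMap.mem_range.mpr ⟨w, hw⟩
  haveI := hepi
  exact hQuot W X hW ⟨g, NatTrans.epi_of_epi_app g⟩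

end Key

section Classes

/-- Generalized nonvanishing of interval structure maps. -/
lemma ivl_map_ne_zero' {a b c d : Fin n} (hcd : c ≤ d)
    (h1 : a ≤ c ∧ c ≤ b) (h2 : a ≤ d ∧ d ≤ b) :
    (Ivl a b).map (homOfLE hcd).op ≠ 0 := by
  intro h
  have hv : ((Ivl a b).map (homOfLE hcd).op (mvOne h2)).1 = 1 := iotaM_val_pos h1 _
  rw [h] at hv
  change (0 : F2) = 1 at hv
  exact one_ne_zero (α := F2) (by simpa using hv.symm)

lemma map_eq_zero_of_iso {Z W : RepCat n} (e : Z ≅ W) {i j : (Fin n)ᵒᵖ} (f : i ⟶ j)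
    (h : W.map f = 0) : Z.map f = 0 := by
  have h2 := e.hom.naturality f
  calc Z.map f = Z.map f ≫ 𝟙 _ := (Category.comp_id _).symm
    _ = Z.map f ≫ (e.hom.app j ≫ e.inv.app j) := by rw [Iso.hom_inv_id_app]
    _ = (Z.map f ≫ e.hom.app j) ≫ e.inv.app j := (Category.assoc _ _ _).symm
    _ = (e.hom.app i ≫ W.map f) ≫ e.inv.app j := by rw [h2]
    _ = 0 := by rw [h, comp_zero, zero_comp]

/-- The class of finite-dimensional representations associated to a set of intervals. -/
def idlToCls (T : Set (Fin n × Fin n)) : Set (FinDimRep n) :=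
  {X | ∀ a b : Fin n, ∀ hab : a ≤ b, (a, b) ∉ T → X.1.map (homOfLE hab).op = 0}

lemma idlToCls_isoClosed (T : Set (Fin n × Fin n)) : IsoClosed (idlToCls T) := by
  rintro X Y ⟨e⟩ hX a b hab hT
  exact map_eq_zero_of_iso e.symm _ (hX a b hab hT)

lemma idlToCls_containsZero (T : Set (Fin n × Fin n)) : ContainsZero (idlToCls T) := by
  intro X hX a b hab _
  exact (hX.obj _).eq_zero_of_tgt _

lemma idlToCls_sumClosed (T : Set (Fin n × Fin n)) : SumClosed (idlToCls T) := by
  rintro X Y Z hX hY ⟨e⟩ a b hab hT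
  refine map_eq_zero_of_iso e _ ?_
  have hfst := (biprod.fst : X.1 ⊞ Y.1 ⟶ X.1).naturality (homOfLE hab).op
  have hsnd := (biprod.snd : X.1 ⊞ Y.1 ⟶ Y.1).naturality (homOfLE hab).op
  have htot := congr_app (biprod.total (X := X.1) (Y := Y.1)) (Opposite.op a)
  calc (X.1 ⊞ Y.1).map (homOfLE hab).op
      = (X.1 ⊞ Y.1).map (homOfLE hab).op ≫ 𝟙 _ := (Category.comp_id _).symm
    _ = (X.1 ⊞ Y.1).map (homOfLE hab).op ≫
        ((biprod.fst ≫ biprod.inl + biprod.snd ≫ biprod.inr :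
          X.1 ⊞ Y.1 ⟶ X.1 ⊞ Y.1)).app (Opposite.op a) := by rw [htot]; rfl
    _ = 0 := by
        rw [NatTrans.app_add, NatTrans.comp_app, NatTrans.comp_app,
          Preadditive.comp_add, ← Category.assoc, ← Category.assoc, hfst, hsnd,
          hX a b hab hT, hY a b hab hT, comp_zero, zero_comp, comp_zero, zero_comp,
          add_zero]

lemma idlToCls_subClosed (T : Set (Fin n × Fin n)) : SubClosed (idlToCls T) := by
  rintro X Y hY ⟨m, hm⟩ a b hab hT
  have hnat := m.naturality (homOfLE hab).op
  haveI := hm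
  haveI : Mono (m.app (Opposite.op a)) := inferInstance
  rw [← cancel_mono (m.app (Opposite.op a)), zero_comp, hnat, hY a b hab hT, comp_zero]

lemma idlToCls_quotClosed (T : Set (Fin n × Fin n)) : QuotClosed (idlToCls T) := by
  rintro X Y hX ⟨m, hm⟩ a b hab hT
  have hnat := m.naturality (homOfLE hab).op
  haveI := hm
  haveI : Epi (m.app (Opposite.op b)) := inferInstance
  rw [← cancel_epi (m.app (Opposite.op b)), comp_zero, ← hnat, hX a b hab hT, zero_comp]

/-- The set of intervals associated to a class. -/
def clsToIdl (S : Set (FinDimRep n)) : Set (Fin n × Fin n) :=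
  {p | p.1 ≤ p.2 ∧ IvlF p.1 p.2 ∈ S}

end Classes

section Main

variable {S : Set (FinDimRep n)} {T : Set (Fin n × Fin n)}

lemma clsToIdl_isIdl (hSub : SubClosed S) (hQuot : QuotClosed S) :
    IsIdl (clsToIdl S) := by
  constructor
  · exact fun p hp => hp.1
  · rintro a b c d ⟨hab, hmem⟩ hac hcd hdb
    refine ⟨hcd, ?_⟩
    exact ivl_mem_of_map_ne_zero hSub hQuot (IvlF a b) hmem hcd
      (ivl_map_ne_zero' hcd ⟨hac, hcd.trans hdb⟩ ⟨hac.trans hcd, hdb⟩)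

lemma idlToCls_clsToIdl (hIso : IsoClosed S) (hZero : ContainsZero S)
    (hSum : SumClosed S) (hSub : SubClosed S) (hQuot : QuotClosed S) :
    idlToCls (clsToIdl S) = S := by
  ext X
  constructor
  · intro hX
    apply mem_of_maps_vanish hIso hZero hSum hQuot X
    intro a b hab hIvl
    exact hX a b hab (fun hp => hIvl hp.2)
  · intro hX a b hab hT
    by_contra hne
    exact hT ⟨hab, ivl_mem_of_map_ne_zero hSub hQuot X hX hab hne⟩

lemma clsToIdl_idlToCls (hT : IsIdl T) : clsToIdl (idlToCls T) = T := by
  ext ⟨a, b⟩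
  constructor
  · rintro ⟨hab, hIvl⟩
    by_contra hnot
    exact ivl_map_ne_zero' hab ⟨le_rfl, hab⟩ ⟨hab, le_rfl⟩ (hIvl a b hab hnot)
  · intro hmem
    have hab : a ≤ b := hT.1 _ hmem
    refine ⟨hab, ?_⟩
    intro c d hcd hnotT
    by_cases hcase : a ≤ c ∧ d ≤ b
    · exact absurd (hT.2 a b c d hmem hcase.1 hcd hcase.2) hnotT
    · exact ivl_map_eq_zero hcd hcase

/-- The classes in question correspond exactly to ideals of intervals. -/
def clsEquivIdl :
    {S : Set (FinDimRep n) //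
      IsoClosed S ∧ ContainsZero S ∧ SumClosed S ∧ SubClosed S ∧ QuotClosed S} ≃
    {T : Set (Fin n × Fin n) // IsIdl T} where
  toFun := fun ⟨S, h⟩ => ⟨clsToIdl S, clsToIdl_isIdl h.2.2.2.1 h.2.2.2.2⟩
  invFun := fun ⟨T, hT⟩ => ⟨idlToCls T,
    idlToCls_isoClosed T, idlToCls_containsZero T, idlToCls_sumClosed T,
    idlToCls_subClosed T, idlToCls_quotClosed T⟩
  left_inv := fun ⟨S, h⟩ => Subtype.ext
    (idlToCls_clsToIdl h.1 h.2.1 h.2.2.1 h.2.2.2.1 h.2.2.2.2)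
  right_inv := fun ⟨T, hT⟩ => Subtype.ext (clsToIdl_idlToCls hT)

end Main

theorem card_sub_and_quot_closed_subcategories (n : ℕ) (hn : 1 ≤ n) :
    Nat.card {S : Set (FinDimRep n) //
      IsoClosed S ∧ ContainsZero S ∧ SumClosed S ∧ SubClosed S ∧ QuotClosed S} =
      catalan (n + 1) := by
  rw [Nat.card_congr (clsEquivIdl (n := n)), card_idl, card_cpaths_catalan]
end
end

section
/- Let P be a partially ordered set, F a field, and x ∈ P. The assignments I ↦ Σ_{y ∈ I} h_y (the subfunctor of h_x generated by the images of h_y → h_x for y ∈ I) and F' ↦ { y ∈ P : F'(y) ≠ 0 } are mutually inverse, inclusion-preserving bijections between the lattice of lower sets of the principal lower set ↓x = { y ∈ P : y ≤ x } and the lattice of subfunctors of h_x in the category of functors Pᵒᵖ → (F-vector spaces). In particular, the lattice of subfunctors of h_x is distributive. -/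
open CategoryTheory CategoryTheory.Limits

noncomputable section

open Classical in
/-- `dimP x y = 1` if `y ≤ x`, and `0` otherwise. -/
def dimP {P : Type} [PartialOrder P] (x y : P) : ℕ := if y ≤ x then 1 else 0

lemma dimP_eq_one_iff {P : Type} [PartialOrder P] {x y : P} :
    dimP x y = 1 ↔ y ≤ x := by
  unfold dimP; split <;> simp_all

lemma dimP_le_one {P : Type} [PartialOrder P] (x y : P) : dimP x y ≤ 1 := by
  unfold dimP; split <;> omega

variable (P : Type) [PartialOrder P] (F : Type) [Field F]

/-- The structure maps of the representable representation `h_x`. -/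
def hMap (x s t : P) : (Fin (dimP x s) → F) →ₗ[F] (Fin (dimP x t) → F) where
  toFun f _ := if h : dimP x s = 1 then f ⟨0, by omega⟩ else 0
  map_add' f g := by
    funext k
    by_cases h : dimP x s = 1 <;> simp [h]
  map_smul' c f := by
    funext k
    by_cases h : dimP x s = 1 <;> simp [h]

lemma hMap_apply (x s t : P) (f : Fin (dimP x s) → F) (k : Fin (dimP x t)) :
    hMap P F x s t f k = if h : dimP x s = 1 then f ⟨0, by omega⟩ else 0 := rfl

/-- The representable representation `h_x : Pᵒᵖ ⥤ ModuleCat F`, with value `F`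
at `y` if `y ≤ x` and `0` otherwise, and identity structure maps whenever both
values are `F`. -/
def hRep (x : P) : Pᵒᵖ ⥤ ModuleCat.{0} F where
  obj y := ModuleCat.of F (Fin (dimP x y.unop) → F)
  map {y z} _ := ModuleCat.ofHom (hMap P F x y.unop z.unop)
  map_id y := by
    refine ModuleCat.hom_ext (LinearMap.ext fun f => ?_)
    funext k
    show hMap P F x y.unop y.unop f k = f k
    rw [hMap_apply]
    have hk := k.isLt
    have hle := dimP_le_one x y.unop
    have h1 : dimP x y.unop = 1 := by omega
    rw [dif_pos h1]
    congr 1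
    exact Fin.ext (by omega)
  map_comp {i j k} f g := by
    have hij : j.unop ≤ i.unop := (leOfHom f.unop)
    have hjk : k.unop ≤ j.unop := (leOfHom g.unop)
    refine ModuleCat.hom_ext (LinearMap.ext fun v => ?_)
    funext l
    show hMap P F x i.unop k.unop v l =
      hMap P F x j.unop k.unop (hMap P F x i.unop j.unop v) l
    simp only [hMap_apply]
    by_cases hi : dimP x i.unop = 1
    · have hj1 : dimP x j.unop = 1 := by
        rw [dimP_eq_one_iff] at *
        exact le_trans hij hi
      rw [dif_pos hi, dif_pos hj1]
    · rw [dif_neg hi]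
      by_cases hj : dimP x j.unop = 1
      · rw [dif_pos hj]
        try rw [dif_neg hi]
      · rw [dif_neg hj]

/-- A subfunctor of a representation `G : Pᵒᵖ ⥤ ModuleCat F`: a family of
submodules of the values of `G` which is closed under the structure maps. -/
@[ext]
structure Subfunctor {P : Type} [PartialOrder P] {F : Type} [Field F]
    (G : Pᵒᵖ ⥤ ModuleCat.{0} F) where
  toFun : ∀ y : Pᵒᵖ, Submodule F (G.obj y)
  map_le : ∀ {y z : Pᵒᵖ} (f : y ⟶ z), (toFun y).map (G.map f).hom ≤ toFun z

namespace Subfunctor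

variable {P F} {G : Pᵒᵖ ⥤ ModuleCat.{0} F}

instance : PartialOrder (Subfunctor G) where
  le S T := ∀ y, S.toFun y ≤ T.toFun y
  le_refl S y := le_refl _
  le_trans S T U h h' y := le_trans (h y) (h' y)
  le_antisymm S T h h' := by
    ext y v
    exact ⟨fun hv => h y hv, fun hv => h' y hv⟩

/-- The lattice of subfunctors, with pointwise join and meet. -/
instance : Lattice (Subfunctor G) where
  sup S T := ⟨fun y => S.toFun y ⊔ T.toFun y, fun {y z} f => by
    rw [Submodule.map_sup]
    exact sup_le_sup (S.map_le f) (T.map_le f)⟩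
  le_sup_left S T y := le_sup_left
  le_sup_right S T y := le_sup_right
  sup_le S T U h h' y := sup_le (h y) (h' y)
  inf S T := ⟨fun y => S.toFun y ⊓ T.toFun y, fun {y z} f =>
    le_trans (Submodule.map_inf_le _) (inf_le_inf (S.map_le f) (T.map_le f))⟩
  inf_le_left S T y := inf_le_left
  inf_le_right S T y := inf_le_right
  le_inf S T U h h' y := le_inf (h y) (h' y)

end Subfunctor

end


noncomputable section AuxProof

variable {P : Type} [PartialOrder P] {F : Type} [Field F]

lemma submodule_fin_eq_bot_or_top {n : ℕ} (hn : n ≤ 1) (S : Submodule F (Fin n → F)) :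
    S = ⊥ ∨ S = ⊤ := by
  interval_cases n
  · left
    ext v
    have hv : v = 0 := Subsingleton.elim v 0
    subst hv
    exact ⟨fun _ => (Submodule.mem_bot F).mpr rfl, fun _ => S.zero_mem⟩
  · by_cases h : S = ⊥
    · exact Or.inl h
    · right
      obtain ⟨v, hv, hv0⟩ := Submodule.exists_mem_ne_zero_of_ne_bot h
      have hv00 : v 0 ≠ 0 := by
        intro h0
        exact hv0 (funext fun k => by rw [Subsingleton.elim k (0 : Fin 1)]; exact h0)
      ext w
      simp only [Submodule.mem_top, iff_true]
      have : w = (w 0 * (v 0)⁻¹) • v := by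
        funext k
        rw [Subsingleton.elim k (0 : Fin 1)]
        simp only [Pi.smul_apply, smul_eq_mul]
        field_simp
      rw [this]
      exact S.smul_mem _ hv

lemma fin_one_top_ne_bot : (⊤ : Submodule F (Fin 1 → F)) ≠ ⊥ := by
  intro h
  have : (fun _ => (1 : F) : Fin 1 → F) ∈ (⊥ : Submodule F (Fin 1 → F)) := h ▸ Submodule.mem_top
  rw [Submodule.mem_bot] at this
  exact one_ne_zero (congrFun this 0)

lemma top_ne_bot_of_eq_one {n : ℕ} (hn : n = 1) :
    (⊤ : Submodule F (Fin n → F)) ≠ ⊥ := by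
  subst hn; exact fin_one_top_ne_bot

variable (P F) in
open Classical in
/-- The subfunctor of `h_x` associated to a lower set. -/
def lsToSub (x : P) (I : LowerSet {y : P // y ≤ x}) : Subfunctor (hRep P F x) where
  toFun y := if ∃ hz : y.unop ≤ x, (⟨y.unop, hz⟩ : {y : P // y ≤ x}) ∈ I then ⊤ else ⊥
  map_le {y z} f := by
    by_cases h : ∃ hz : y.unop ≤ x, (⟨y.unop, hz⟩ : {y : P // y ≤ x}) ∈ I
    · obtain ⟨hy, hyI⟩ := h
      have hle : z.unop ≤ y.unop := leOfHom f.unop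
      have hzx : z.unop ≤ x := le_trans hle hy
      have hzI : (⟨z.unop, hzx⟩ : {y : P // y ≤ x}) ∈ I :=
        I.lower (show (⟨z.unop, hzx⟩ : {y : P // y ≤ x}) ≤ ⟨y.unop, hy⟩ from hle) hyI
      rw [if_pos ⟨hy, hyI⟩, if_pos ⟨hzx, hzI⟩]
      exact le_top
    · rw [if_neg h, Submodule.map_bot]
      exact bot_le

variable (P F) in
/-- The lower set associated to a subfunctor of `h_x`. -/
def subToLs (x : P) (S : Subfunctor (hRep P F x)) : LowerSet {y : P // y ≤ x} where
  carrier := {y | S.toFun (Opposite.op y.1) ≠ ⊥}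
  lower' := by
    rintro ⟨y, hy⟩ ⟨z, hz⟩ hle hne
    simp only [Set.mem_setOf_eq] at hne ⊢
    have hdy : dimP x y = 1 := dimP_eq_one_iff.mpr hy
    have hdz : dimP x z = 1 := dimP_eq_one_iff.mpr hz
    have htop : S.toFun (Opposite.op y) = ⊤ := by
      rcases submodule_fin_eq_bot_or_top (dimP_le_one x y) (S.toFun (Opposite.op y)) with h | h
      · exact absurd h hne
      · exact h
    intro hbot
    have hv : (fun _ => (1 : F) : Fin (dimP x y) → F) ∈ S.toFun (Opposite.op y) := by
      rw [htop]; exact Submodule.mem_top (M := (hRep P F x).obj (Opposite.op y))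
    have hle' : Opposite.op y ⟶ Opposite.op z := (homOfLE (show z ≤ y from hle)).op
    have hm := S.map_le hle' (Submodule.mem_map_of_mem (f := ((hRep P F x).map hle').hom) hv)
    rw [hbot, Submodule.mem_bot] at hm
    have hz1 : 0 < dimP x z := by omega
    have h0 : hMap P F x y z (fun _ => (1 : F)) ⟨0, hz1⟩ = 0 := by
      have := congrFun hm ⟨0, hz1⟩
      exact this
    rw [hMap_apply, dif_pos hdy] at h0
    exact one_ne_zero h0

lemma mem_subToLs_iff (x : P) (S : Subfunctor (hRep P F x)) (z : P) (hz : z ≤ x) :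
    (⟨z, hz⟩ : {y : P // y ≤ x}) ∈ subToLs P F x S ↔ S.toFun (Opposite.op z) ≠ ⊥ :=
  Iff.rfl

open Classical in
lemma lsToSub_apply (x : P) (I : LowerSet {y : P // y ≤ x}) (y : Pᵒᵖ) :
    (lsToSub P F x I).toFun y =
      if ∃ hz : y.unop ≤ x, (⟨y.unop, hz⟩ : {y : P // y ≤ x}) ∈ I then ⊤ else ⊥ := rfl

lemma mem_lsToSub_iff (x : P) (I : LowerSet {y : P // y ≤ x}) (z : P) (hz : z ≤ x) :
    (⟨z, hz⟩ : {y : P // y ≤ x}) ∈ I ↔ (lsToSub P F x I).toFun (Opposite.op z) ≠ ⊥ := by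
  have hdz : dimP x z = 1 := dimP_eq_one_iff.mpr hz
  rw [lsToSub_apply]
  constructor
  · intro hmem
    rw [if_pos ⟨hz, hmem⟩]
    exact top_ne_bot_of_eq_one hdz
  · intro hne
    by_contra hmem
    apply hne
    rw [if_neg]
    rintro ⟨h, hm⟩
    exact hmem hm

end AuxProof

theorem lowerSets_order_iso_subfunctors
    (P : Type) [PartialOrder P] (F : Type) [Field F] (x : P) :
    ∃ e : LowerSet {y : P // y ≤ x} ≃o Subfunctor (hRep P F x),
      (∀ (I : LowerSet {y : P // y ≤ x}) (z : P) (hz : z ≤ x),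
          ((⟨z, hz⟩ : {y : P // y ≤ x}) ∈ I ↔ (e I).toFun (Opposite.op z) ≠ ⊥)) ∧
      (∀ (S : Subfunctor (hRep P F x)) (z : P) (hz : z ≤ x),
          ((⟨z, hz⟩ : {y : P // y ≤ x}) ∈ e.symm S ↔ S.toFun (Opposite.op z) ≠ ⊥)) ∧
      (∀ S T U : Subfunctor (hRep P F x), S ⊓ (T ⊔ U) = (S ⊓ T) ⊔ (S ⊓ U)) := by
  classical
  have subfun_eq_bot_or_top : ∀ (S : Subfunctor (hRep P F x)) (y : Pᵒᵖ),
      S.toFun y = ⊥ ∨ S.toFun y = ⊤ := fun S y =>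
    submodule_fin_eq_bot_or_top (dimP_le_one x y.unop) (S.toFun y)
  refine ⟨{ toFun := lsToSub P F x, invFun := subToLs P F x,
            left_inv := ?_, right_inv := ?_, map_rel_iff' := ?_ }, ?_, ?_, ?_⟩
  · intro I
    ext ⟨z, hz⟩
    exact (mem_lsToSub_iff (F := F) x I z hz).symm
  · intro S
    apply Subfunctor.ext
    funext y
    rw [lsToSub_apply]
    by_cases hzx : y.unop ≤ x
    · rcases subfun_eq_bot_or_top S y with hb | ht
      · have hc : ¬ ∃ h : y.unop ≤ x,
            (⟨y.unop, h⟩ : {y : P // y ≤ x}) ∈ subToLs P F x S := by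
          rintro ⟨h, hm⟩
          exact hm hb
        rw [if_neg hc, hb]
      · have hmem : (⟨y.unop, hzx⟩ : {y : P // y ≤ x}) ∈ subToLs P F x S := by
          show S.toFun (Opposite.op y.unop) ≠ ⊥
          intro hb
          exact top_ne_bot_of_eq_one (dimP_eq_one_iff.mpr hzx) (ht ▸ hb)
        rw [if_pos ⟨hzx, hmem⟩, ht]
    · have hd : dimP x y.unop = 0 := by
        unfold dimP; rw [if_neg hzx]
      have hie : IsEmpty (Fin (dimP x y.unop)) := by rw [hd]; infer_instance
      have hsub : Subsingleton (Fin (dimP x y.unop) → F) :=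
        ⟨fun a b => funext fun i => (hie.false i).elim⟩
      have hSbot : S.toFun y = ⊥ := by
        ext v
        have hv : v = 0 := @Subsingleton.elim _ hsub v 0
        simp only [Submodule.mem_bot]
        exact ⟨fun _ => hv, fun _ => hv ▸ (S.toFun y).zero_mem⟩
      have hc : ¬ ∃ h : y.unop ≤ x,
          (⟨y.unop, h⟩ : {y : P // y ≤ x}) ∈ subToLs P F x S := by
        rintro ⟨h, _⟩
        exact hzx h
      rw [if_neg hc, hSbot]
  · intro I J
    show lsToSub P F x I ≤ lsToSub P F x J ↔ I ≤ J
    constructor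
    · intro h
      rintro ⟨z, hz⟩ hm
      have hIt : (lsToSub P F x I).toFun (Opposite.op z) = ⊤ := by
        have hne := (mem_lsToSub_iff (F := F) x I z hz).mp hm
        rcases subfun_eq_bot_or_top (lsToSub P F x I) (Opposite.op z) with h' | h'
        · exact absurd h' hne
        · exact h'
      refine (mem_lsToSub_iff (F := F) x J z hz).mpr ?_
      intro hb
      have h2 := h (Opposite.op z)
      rw [hIt, hb, le_bot_iff] at h2
      exact top_ne_bot_of_eq_one (dimP_eq_one_iff.mpr hz) h2
    · intro h y
      rw [lsToSub_apply, lsToSub_apply]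
      by_cases hc : ∃ hz : y.unop ≤ x, (⟨y.unop, hz⟩ : {y : P // y ≤ x}) ∈ I
      · obtain ⟨hz, hm⟩ := hc
        rw [if_pos ⟨hz, hm⟩, if_pos ⟨hz, h hm⟩]
      · rw [if_neg hc]
        exact bot_le
  · intro I z hz
    exact mem_lsToSub_iff x I z hz
  · intro S z hz
    exact mem_subToLs_iff x S z hz
  · intro S T U
    apply Subfunctor.ext
    funext y
    show S.toFun y ⊓ (T.toFun y ⊔ U.toFun y) = (S.toFun y ⊓ T.toFun y) ⊔ (S.toFun y ⊓ U.toFun y)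
    rcases subfun_eq_bot_or_top S y with h1 | h1 <;>
      rcases subfun_eq_bot_or_top T y with h2 | h2 <;>
        rcases subfun_eq_bot_or_top U y with h3 | h3 <;>
          rw [h1, h2, h3] <;> simp
end

section
/- Let P be a partially ordered set. Then P is coherent if and only if for every x ∈ P the compact elements of the complete lattice of lower sets of ↓x = { y ∈ P : y ≤ x } are closed under binary meets (intersections). -/
open CompleteLattice

lemma iic_compact {α : Type*} [Preorder α] (a : α) :
    IsCompactElement (LowerSet.Iic a) := by
  rw [isCompactElement_iff_exists_le_sSup_of_le_sSup]
  intro S hS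
  have ha : a ∈ sSup S := hS (by simp [LowerSet.mem_Iic_iff])
  rw [LowerSet.mem_sSup_iff] at ha
  obtain ⟨I, hI, haI⟩ := ha
  exact ⟨{I}, by simpa, by simpa [LowerSet.Iic_le] using haI⟩

lemma mem_finsetSup_iic {α : Type*} [Preorder α] (F : Finset α) (w : α) :
    w ∈ F.sup LowerSet.Iic ↔ ∃ a ∈ F, w ≤ a := by
  rw [Finset.sup_eq_iSup]
  simp [LowerSet.mem_iSup_iff, LowerSet.mem_Iic_iff]

lemma compact_iff_finset {α : Type*} [Preorder α] (I : LowerSet α) :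
    IsCompactElement I ↔ ∃ F : Finset α, I = F.sup LowerSet.Iic := by
  constructor
  · intro h
    rw [isCompactElement_iff_exists_le_sSup_of_le_sSup] at h
    obtain ⟨t, ht, hle⟩ := h (LowerSet.Iic '' (I : Set α))
      (by intro w hw
          rw [SetLike.mem_coe, LowerSet.mem_sSup_iff]
          exact ⟨LowerSet.Iic w, Set.mem_image_of_mem _ hw, by simp [LowerSet.mem_Iic_iff]⟩)
    classical
    have hch : ∀ J ∈ t, ∃ a, a ∈ (I : Set α) ∧ LowerSet.Iic a = J := by
      intro J hJ
      obtain ⟨a, ha, ha2⟩ := ht hJ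
      exact ⟨a, ha, ha2⟩
    choose f hf hf2 using hch
    refine ⟨t.attach.image (fun J => f J.1 J.2), le_antisymm ?_ ?_⟩
    · refine hle.trans ?_
      apply Finset.sup_le
      intro J hJ
      have := Finset.le_sup (f := LowerSet.Iic)
        (Finset.mem_image_of_mem (fun J : {x // x ∈ t} => f J.1 J.2) (t.mem_attach ⟨J, hJ⟩))
      rw [hf2 J hJ] at this
      exact this
    · apply Finset.sup_le
      intro a ha
      simp only [Finset.mem_image, Finset.mem_attach, true_and, Subtype.exists] at ha
      obtain ⟨J, hJ, rfl⟩ := ha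
      rw [LowerSet.Iic_le]
      exact hf J hJ
  · rintro ⟨F, rfl⟩
    exact isCompactElement_finsetSup F (fun a _ => iic_compact a)

/-- A poset `P` is coherent if for every diagram `y ≤ x ≥ y'` there are finitely
many diagrams `y ≥ z_α ≤ y'` such that every diagram `y ≥ z ≤ y'` satisfies
`z ≤ z_α` for some `α`. -/
def CoherentPoset (P : Type*) [PartialOrder P] : Prop :=
  ∀ x y y' : P, y ≤ x → y' ≤ x →
    ∃ Z : Finset P, (∀ z ∈ Z, z ≤ y ∧ z ≤ y') ∧
      ∀ z : P, z ≤ y → z ≤ y' → ∃ z' ∈ Z, z ≤ z'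

/-- a poset is coherent iff for every `x` the compact elements of
the complete lattice of lower sets of `↓x` are closed under binary meets. -/
theorem coherent_iff_compacts_closed_under_meet (P : Type*) [PartialOrder P] :
    CoherentPoset P ↔
      ∀ x : P, ∀ I J : LowerSet {y : P // y ≤ x},
        IsCompactElement I → IsCompactElement J →
          IsCompactElement (I ⊓ J) := by
  classical
  constructor
  · intro hP x I J hI hJ
    rw [compact_iff_finset] at hI hJ ⊢
    obtain ⟨F, rfl⟩ := hI
    obtain ⟨G, rfl⟩ := hJ
    have key : ∀ a b : {y : P // y ≤ x}, ∃ Z : Finset {y : P // y ≤ x},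
        (∀ z ∈ Z, z ≤ a ∧ z ≤ b) ∧
          ∀ z : {y : P // y ≤ x}, z ≤ a → z ≤ b → ∃ z' ∈ Z, z ≤ z' := by
      intro a b
      obtain ⟨Z, hZ1, hZ2⟩ := hP x a.1 b.1 a.2 b.2
      refine ⟨(Z.filter (fun u => u ≤ x)).attach.image
        (fun z : {w // w ∈ Z.filter (fun u => u ≤ x)} =>
          (⟨z.1, (Finset.mem_filter.mp z.2).2⟩ : {y : P // y ≤ x})), ?_, ?_⟩
      · intro z hz
        simp only [Finset.mem_image, Finset.mem_attach, true_and, Subtype.exists] at hz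
        obtain ⟨w, hw, rfl⟩ := hz
        have hw' := (Finset.mem_filter.mp hw).1
        exact ⟨(hZ1 w hw').1, (hZ1 w hw').2⟩
      · intro z hz1 hz2
        obtain ⟨z', hz', hzz'⟩ := hZ2 z.1 hz1 hz2
        have hz'x : z' ≤ x := (hZ1 z' hz').1.trans a.2
        have hmem : z' ∈ Z.filter (fun u => u ≤ x) := Finset.mem_filter.mpr ⟨hz', hz'x⟩
        refine ⟨⟨z', hz'x⟩, ?_, hzz'⟩
        exact Finset.mem_image.mpr ⟨⟨z', hmem⟩, Finset.mem_attach _ _, rfl⟩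
    choose Zf hZf1 hZf2 using key
    refine ⟨(F ×ˢ G).sup (fun p => Zf p.1 p.2), ?_⟩
    apply LowerSet.ext
    ext w
    simp only [SetLike.mem_coe]
    rw [show (w ∈ (F.sup LowerSet.Iic ⊓ G.sup LowerSet.Iic)) ↔
        w ∈ F.sup LowerSet.Iic ∧ w ∈ G.sup LowerSet.Iic from LowerSet.mem_inf_iff,
      mem_finsetSup_iic, mem_finsetSup_iic, mem_finsetSup_iic]
    constructor
    · rintro ⟨⟨a, ha, hwa⟩, ⟨b, hb, hwb⟩⟩
      obtain ⟨z, hz, hwz⟩ := hZf2 a b w hwa hwb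
      exact ⟨z, Finset.mem_sup.mpr ⟨(a, b), Finset.mem_product.mpr ⟨ha, hb⟩, hz⟩, hwz⟩
    · rintro ⟨z, hz, hwz⟩
      obtain ⟨⟨a, b⟩, hab, hzab⟩ := Finset.mem_sup.mp hz
      obtain ⟨ha, hb⟩ := Finset.mem_product.mp hab
      exact ⟨⟨a, ha, hwz.trans (hZf1 a b z hzab).1⟩, ⟨b, hb, hwz.trans (hZf1 a b z hzab).2⟩⟩
  · intro h x y y' hy hy'
    have hc := h x (LowerSet.Iic ⟨y, hy⟩) (LowerSet.Iic ⟨y', hy'⟩)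
      (iic_compact _) (iic_compact _)
    rw [compact_iff_finset] at hc
    obtain ⟨F, hF⟩ := hc
    refine ⟨F.image Subtype.val, ?_, ?_⟩
    · intro z hz
      obtain ⟨w, hwF, rfl⟩ := Finset.mem_image.mp hz
      have hw : w ∈ F.sup LowerSet.Iic := (mem_finsetSup_iic F w).mpr ⟨w, hwF, le_rfl⟩
      rw [← hF, LowerSet.mem_inf_iff] at hw
      exact ⟨hw.1, hw.2⟩
    · intro z hz1 hz2
      have hzx : z ≤ x := hz1.trans hy
      have : (⟨z, hzx⟩ : {y : P // y ≤ x}) ∈ F.sup LowerSet.Iic := by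
        rw [← hF, LowerSet.mem_inf_iff]
        exact ⟨hz1, hz2⟩
      obtain ⟨a, ha, hza⟩ := (mem_finsetSup_iic F _).mp this
      exact ⟨a.1, Finset.mem_image_of_mem _ ha, hza⟩
end
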